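/- Assume t = 1 and n ≥ 2, and let A, A' be one-dimensional (automatically isotropic) subspaces of V. Then the pair (A,A') is good if and only if A = A' or A' ∩ A^⊥ = 0; equivalently, (A,A') is not good exactly when A ≠ A' and A' ⊆ A^⊥. -/

import Mathlib

open Module Submodule

variable {k V : Type*} [Field k] [AddCommGroup V] [Module k V]

/-- The orthogonal `A^⊥ = {x ∈ V : ⟨x,a⟩ = 0 ∀ a ∈ A}` of a subspace `A` of `V` with
respect to a bilinear form `B` on `V`. -/
def perp (B : V →ₗ[k] V →ₗ[k] k) (A : Submodule k V) : Submodule k V where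
  carrier := {x | ∀ a ∈ A, B x a = 0}
  add_mem' := fun {x y} hx hy a ha => by
    simp [map_add, LinearMap.add_apply, hx a ha, hy a ha]
  zero_mem' := fun a ha => by simp
  smul_mem' := fun c x hx a ha => by
    simp [map_smul, LinearMap.smul_apply, hx a ha]

/-- The pair `(A,A')` of isotropic subspaces is *good* if there is a subspace `L` with
`A^⊥ = L ⊕ A` and `A'^⊥ = L ⊕ A'` (internal direct sums). -/
def IsGood (B : V →ₗ[k] V →ₗ[k] k) (A A' : Submodule k V) : Prop :=
  ∃ L : Submodule k V,
    (Disjoint L A ∧ L ⊔ A = perp B A) ∧ (Disjoint L A' ∧ L ⊔ A' = perp B A')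

lemma mem_perp {B : V →ₗ[k] V →ₗ[k] k} {S : Submodule k V} {x : V} :
    x ∈ perp B S ↔ ∀ a ∈ S, B x a = 0 := Iff.rfl

/-- A line is contained in a subspace or meets it trivially. -/
lemma line_le_or_inf_bot [FiniteDimensional k V] {A : Submodule k V} (S : Submodule k V)
    (hA : finrank k A = 1) : A ≤ S ∨ A ⊓ S = ⊥ := by
  by_cases h : A ⊓ S = ⊥
  · exact Or.inr h
  · left
    have h1 : 0 < finrank k (A ⊓ S : Submodule k V) := by
      rw [Module.finrank_pos_iff]
      exact (Submodule.nontrivial_iff_ne_bot).mpr h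
    have h2 : A ⊓ S = A :=
      Submodule.eq_of_le_of_finrank_le (inf_le_left : A ⊓ S ≤ A) (by omega)
    calc A = A ⊓ S := h2.symm
    _ ≤ S := inf_le_right

/-- The perp of a sup is the inf of the perps. -/
lemma perp_sup {B : V →ₗ[k] V →ₗ[k] k} (S T : Submodule k V) :
    perp B (S ⊔ T) = perp B S ⊓ perp B T := by
  ext x
  simp only [mem_perp, Submodule.mem_inf]
  constructor
  · intro h
    exact ⟨fun a ha => h a (Submodule.mem_sup_left ha),
           fun a ha => h a (Submodule.mem_sup_right ha)⟩
  · rintro ⟨h1, h2⟩ a ha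
    obtain ⟨s, hs, t, ht, rfl⟩ := Submodule.mem_sup.mp ha
    simp [map_add, h1 s hs, h2 t ht]

/-- Let `V` be a `2n`-dimensional symplectic vector space over `k` with
`n ≥ 2`, and let `A, A'` be one-dimensional (automatically isotropic) subspaces of `V`.
Then `(A,A')` is good iff `A = A'` or `A' ∩ A^⊥ = 0`; equivalently, `(A,A')` is not good
exactly when `A ≠ A'` and `A' ⊆ A^⊥`. -/
theorem stmt12 [FiniteDimensional k V] (n : ℕ) (hn : 2 ≤ n)
    (B : V →ₗ[k] V →ₗ[k] k)
    (hdim : finrank k V = 2 * n)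
    (halt : ∀ x : V, B x x = 0)
    (hnd : ∀ x : V, (∀ y : V, B x y = 0) → x = 0)
    (A A' : Submodule k V)
    (hdA : finrank k A = 1) (hdA' : finrank k A' = 1) :
    (IsGood B A A' ↔ (A = A' ∨ A' ⊓ perp B A = ⊥)) ∧
    (¬ IsGood B A A' ↔ (A ≠ A' ∧ A' ≤ perp B A)) := by
  -- basic facts about the form
  have hskew : ∀ x y : V, B x y = - B y x := by
    intro x y
    have h := halt (x + y)
    simp only [map_add, LinearMap.add_apply, halt x, halt y, zero_add, add_zero] at h
    exact eq_neg_of_add_eq_zero_right h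
  have hrefl : LinearMap.IsRefl B := fun x y h => by rw [hskew y x, h, neg_zero]
  have hNd : LinearMap.BilinForm.Nondegenerate B := hrefl.nondegenerate_iff_separatingLeft.mpr hnd
  have perp_eq : ∀ S : Submodule k V, perp B S = LinearMap.BilinForm.orthogonal B S := by
    intro S; ext x
    simp only [mem_perp, LinearMap.BilinForm.mem_orthogonal_iff, LinearMap.BilinForm.IsOrtho]
    constructor
    · intro h a ha
      rw [hskew, h a ha, neg_zero]
    · intro h a ha
      rw [hskew, h a ha, neg_zero]
  have fperp : ∀ S : Submodule k V, finrank k (perp B S) = 2 * n - finrank k S := by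
    intro S
    rw [perp_eq, LinearMap.BilinForm.finrank_orthogonal hNd, hdim]
  have pperp : ∀ S : Submodule k V, perp B (perp B S) = S := by
    intro S
    rw [perp_eq, perp_eq, LinearMap.BilinForm.orthogonal_orthogonal hNd hrefl]
  -- lines are isotropic
  have iso : ∀ C : Submodule k V, finrank k C = 1 → C ≤ perp B C := by
    intro C hC x hx a ha
    obtain ⟨v, hv0, hvspan⟩ := finrank_eq_one_iff'.mp hC
    obtain ⟨c, hc⟩ := hvspan ⟨x, hx⟩
    obtain ⟨d, hd⟩ := hvspan ⟨a, ha⟩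
    have hx' : x = c • (v : V) := by
      simpa using congrArg (Subtype.val) hc.symm
    have ha' : a = d • (v : V) := by
      simpa using congrArg (Subtype.val) hd.symm
    rw [hx', ha']
    simp [map_smul, halt]
  have swap : ∀ C C' : Submodule k V, C ≤ perp B C' → C' ≤ perp B C := by
    intro C C' h x hx a ha
    have h2 := h ha x hx
    rw [hskew, h2, neg_zero]
  have hAne : A ≠ ⊥ := by
    intro h; rw [h, finrank_bot] at hdA; exact one_ne_zero hdA.symm
  have hA'ne : A' ≠ ⊥ := by
    intro h; rw [h, finrank_bot] at hdA'; exact one_ne_zero hdA'.symm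
  -- forward direction
  have key1 : IsGood B A A' → A = A' ∨ A' ⊓ perp B A = ⊥ := by
    rintro ⟨L, ⟨hdL, hL⟩, ⟨hdL', hL'⟩⟩
    rcases line_le_or_inf_bot (perp B A) hdA' with hle | hbot
    · left
      have h1 : A ≤ perp B A' := swap A' A hle
      have h2 : perp B A' ≤ perp B A := by
        rw [← hL, ← hL']
        exact sup_le le_sup_left (hle.trans hL.ge)
      have h3 : perp B A ≤ perp B A' := by
        rw [← hL, ← hL']
        exact sup_le le_sup_left (h1.trans hL'.ge)
      have e : perp B A = perp B A' := le_antisymm h3 h2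
      rw [← pperp A, ← pperp A', e]
    · exact Or.inr hbot
  -- backward direction
  have key2 : (A = A' ∨ A' ⊓ perp B A = ⊥) → IsGood B A A' := by
    rintro (rfl | hbot)
    · -- A = A' : choose any complement of A inside perp B A
      have hAW : A ≤ perp B A := iso A hdA
      set W := perp B A with hW
      obtain ⟨L', hL'⟩ := Submodule.exists_isCompl (Submodule.comap W.subtype A)
      have hmapA : Submodule.map W.subtype (Submodule.comap W.subtype A) = A := by
        rw [Submodule.map_comap_subtype, inf_eq_right.mpr hAW]
      have hd : Disjoint (L'.map W.subtype) A := by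
        rw [disjoint_iff, ← hmapA,
          ← Submodule.map_inf W.subtype (Submodule.injective_subtype W),
          (disjoint_iff.mp hL'.disjoint.symm), Submodule.map_bot]
      have hs : L'.map W.subtype ⊔ A = W := by
        rw [← hmapA, ← Submodule.map_sup, (codisjoint_iff.mp hL'.codisjoint.symm),
          Submodule.map_subtype_top]
      exact ⟨L'.map W.subtype, ⟨hd, hs⟩, ⟨hd, hs⟩⟩
    · -- A' ⊓ perp B A = ⊥
      have hA'nle : ¬ A' ≤ perp B A := by
        intro h
        exact hA'ne (by rw [← inf_eq_left.mpr h, hbot])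
      have hApA' : A ⊓ perp B A' = ⊥ := by
        rcases line_le_or_inf_bot (perp B A') hdA with h | h
        · exact absurd (swap A A' h) hA'nle
        · exact h
      have hAA'bot : A ⊓ A' = ⊥ := by
        rcases line_le_or_inf_bot A' hdA with h | h
        · exfalso
          have : A = A' := Submodule.eq_of_le_of_finrank_le h (by omega)
          exact hA'nle (this ▸ iso A hdA)
        · exact h
      have hsupAA' : finrank k (A ⊔ A' : Submodule k V) = 2 := by
        have := Submodule.finrank_sup_add_finrank_inf_eq A A'
        rw [hAA'bot, finrank_bot, hdA, hdA'] at this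
        omega
      set L := perp B A ⊓ perp B A' with hLdef
      have hLperp : L = perp B (A ⊔ A') := (perp_sup A A').symm
      have hLrank : finrank k L = 2 * n - 2 := by
        rw [hLperp, fperp, hsupAA']
      have hdisj : Disjoint L A := by
        rw [disjoint_iff]
        have h1 : L ⊓ A ≤ A ⊓ perp B A' := fun x hx => ⟨hx.2, hx.1.2⟩
        rw [hApA'] at h1
        exact le_bot_iff.mp h1
      have hdisj' : Disjoint L A' := by
        rw [disjoint_iff]
        have h1 : L ⊓ A' ≤ A' ⊓ perp B A := fun x hx => ⟨hx.2, hx.1.1⟩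
        rw [hbot] at h1
        exact le_bot_iff.mp h1
      have hsup : L ⊔ A = perp B A := by
        have hle : L ⊔ A ≤ perp B A := sup_le inf_le_left (iso A hdA)
        refine Submodule.eq_of_le_of_finrank_le hle ?_
        have h1 := Submodule.finrank_sup_add_finrank_inf_eq L A
        rw [disjoint_iff.mp hdisj, finrank_bot, hdA, hLrank] at h1
        rw [fperp, hdA]
        omega
      have hsup' : L ⊔ A' = perp B A' := by
        have hle : L ⊔ A' ≤ perp B A' := sup_le inf_le_right (iso A' hdA')
        refine Submodule.eq_of_le_of_finrank_le hle ?_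
        have h1 := Submodule.finrank_sup_add_finrank_inf_eq L A'
        rw [disjoint_iff.mp hdisj', finrank_bot, hdA', hLrank] at h1
        rw [fperp, hdA']
        omega
      exact ⟨L, ⟨hdisj, hsup⟩, ⟨hdisj', hsup'⟩⟩
  refine ⟨⟨key1, key2⟩, ?_, ?_⟩
  · intro hng
    have h := mt key2 hng
    push_neg at h
    obtain ⟨hne, hninf⟩ := h
    refine ⟨hne, ?_⟩
    rcases line_le_or_inf_bot (perp B A) hdA' with h | h
    · exact h
    · exact absurd h hninf
  · rintro ⟨hne, hle⟩ hg
    rcases key1 hg with h | h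
    · exact hne h
    · rw [inf_eq_left.mpr hle] at h
      exact hA'ne h
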